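/- Scaled Poincaré inequality on a single cell for functions vanishing on a set of positive measure: Let d, m ≥ 1, let Y = (0,1)^d and let E ⊂ Y be a measurable set of positive Lebesgue measure. Then there exists a constant C > 0, depending only on E, such that for every ε > 0, every y₀ ∈ ℝ^d, and every continuously differentiable function v : ℝ^d → ℝ^m that vanishes on y₀ + εE, one has ∫_{y₀ + εY} |v(x)|² dx ≤ C · ε² · ∫_{y₀ + εY} ‖Dv(x)‖² dx. -/

import Mathlib

open MeasureTheory

/-- The open unit cell `Y = (0,1)^d` in `ℝ^d`. -/
def unitCell (d : ℕ) : Set (Fin d → ℝ) :=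
  Set.pi Set.univ fun _ => Set.Ioo (0 : ℝ) 1

/-- The translated `ε`-scaled copy `y₀ + εS` of a set `S ⊆ ℝ^d`. -/
def translatedScaled {d : ℕ} (y₀ : Fin d → ℝ) (ε : ℝ) (S : Set (Fin d → ℝ)) :
    Set (Fin d → ℝ) :=
  (fun y => y₀ + ε • y) '' S

open Set ENNReal

section PoincareAux

variable {d m : ℕ}

noncomputable def Fsq (v : (Fin d → ℝ) → (Fin m → ℝ)) (x : Fin d → ℝ) : ℝ :=
  ∑ i, ∑ j, (fderiv ℝ (fun z => v z i) x (Pi.single j 1)) ^ 2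

lemma Fsq_nonneg (v : (Fin d → ℝ) → (Fin m → ℝ)) (x : Fin d → ℝ) : 0 ≤ Fsq v x :=
  Finset.sum_nonneg fun _ _ => Finset.sum_nonneg fun _ _ => sq_nonneg _

lemma contDiff_comp_pi {v : (Fin d → ℝ) → (Fin m → ℝ)} (hv : ContDiff ℝ 1 v) (i : Fin m) :
    ContDiff ℝ 1 (fun z => v z i) :=
  (ContinuousLinearMap.proj (R := ℝ) (φ := fun _ : Fin m => ℝ) i).contDiff.comp hv

lemma fderiv_apply_sum {f : (Fin d → ℝ) → ℝ} {x : Fin d → ℝ} (u : Fin d → ℝ) :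
    fderiv ℝ f x u = ∑ j, u j * fderiv ℝ f x (Pi.single j 1) := by
  have hu : u = ∑ j, (u j) • (Pi.single j 1 : Fin d → ℝ) := by
    ext k; simp [Finset.sum_apply, Pi.single_apply]
  conv_lhs => rw [hu]
  rw [map_sum]
  simp [smul_eq_mul]

lemma sum_sq_fderiv_le {v : (Fin d → ℝ) → (Fin m → ℝ)} (x : Fin d → ℝ) (u : Fin d → ℝ) :
    ∑ i, (fderiv ℝ (fun z => v z i) x u)^2 ≤ Fsq v x * ∑ j, (u j)^2 := by
  rw [Fsq, Finset.sum_mul]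
  refine Finset.sum_le_sum fun i _ => ?_
  rw [fderiv_apply_sum u]
  calc (∑ j, u j * fderiv ℝ (fun z => v z i) x (Pi.single j 1))^2
      ≤ (∑ j, (u j)^2) * ∑ j, (fderiv ℝ (fun z => v z i) x (Pi.single j 1))^2 :=
        Finset.sum_mul_sq_le_sq_mul_sq _ _ _
    _ = _ := mul_comm _ _

lemma continuous_fderiv_apply' {v : (Fin d → ℝ) → (Fin m → ℝ)} (hv : ContDiff ℝ 1 v)
    (i : Fin m) (w : Fin d → ℝ) :
    Continuous (fun x => fderiv ℝ (fun z => v z i) x w) :=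
  ((contDiff_comp_pi hv i).continuous_fderiv one_ne_zero).clm_apply continuous_const

lemma continuous_Fsq {v : (Fin d → ℝ) → (Fin m → ℝ)} (hv : ContDiff ℝ 1 v) :
    Continuous (Fsq v) := by
  refine continuous_finset_sum _ fun i _ => continuous_finset_sum _ fun j _ => ?_
  exact (continuous_fderiv_apply' hv i _).pow 2

/-- Finite-dimensional Minkowski integral inequality on `[0,1]`. -/
lemma sqrt_sum_sq_intervalIntegral_le {m : ℕ} (f : Fin m → ℝ → ℝ)
    (hf : ∀ i, Continuous (f i)) :
    Real.sqrt (∑ i, (∫ t in (0:ℝ)..1, f i t)^2)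
      ≤ ∫ t in (0:ℝ)..1, Real.sqrt (∑ i, (f i t)^2) := by
  set a : Fin m → ℝ := fun i => ∫ t in (0:ℝ)..1, f i t with ha
  set A := Real.sqrt (∑ i, (a i)^2) with hA
  have hAnn : 0 ≤ A := Real.sqrt_nonneg _
  have hsum_nn : (0:ℝ) ≤ ∑ i, (a i)^2 := Finset.sum_nonneg fun _ _ => sq_nonneg _
  have hIcont : Continuous fun t => Real.sqrt (∑ i, (f i t)^2) := by
    exact (continuous_finset_sum _ fun i _ => (hf i).pow 2).sqrt
  have hInn : 0 ≤ ∫ t in (0:ℝ)..1, Real.sqrt (∑ i, (f i t)^2) := by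
    apply intervalIntegral.integral_nonneg zero_le_one
    intro t _; exact Real.sqrt_nonneg _
  rcases eq_or_lt_of_le hAnn with h0 | hApos
  · rw [← h0]; exact hInn
  have key : A^2 ≤ A * ∫ t in (0:ℝ)..1, Real.sqrt (∑ i, (f i t)^2) := by
    have h1 : A^2 = ∑ i, (a i)^2 := Real.sq_sqrt hsum_nn
    have h2 : ∑ i, (a i)^2 = ∫ t in (0:ℝ)..1, ∑ i, a i * f i t := by
      rw [intervalIntegral.integral_finset_sum]
      · refine Finset.sum_congr rfl fun i _ => ?_
        rw [intervalIntegral.integral_const_mul]; ring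
      · intro i _
        exact (continuous_const.mul (hf i)).intervalIntegrable _ _
    rw [h1, h2]
    have : ∀ t : ℝ, ∑ i, a i * f i t ≤ A * Real.sqrt (∑ i, (f i t)^2) := by
      intro t
      have hcs := Finset.sum_mul_sq_le_sq_mul_sq Finset.univ a (fun i => f i t)
      calc ∑ i, a i * f i t ≤ |∑ i, a i * f i t| := le_abs_self _
        _ = Real.sqrt ((∑ i, a i * f i t)^2) := (Real.sqrt_sq_eq_abs _).symm
        _ ≤ Real.sqrt ((∑ i, (a i)^2) * ∑ i, (f i t)^2) := Real.sqrt_le_sqrt hcs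
        _ = A * Real.sqrt (∑ i, (f i t)^2) := by
            rw [Real.sqrt_mul hsum_nn]
    calc ∫ t in (0:ℝ)..1, ∑ i, a i * f i t
        ≤ ∫ t in (0:ℝ)..1, A * Real.sqrt (∑ i, (f i t)^2) := by
          apply intervalIntegral.integral_mono_on zero_le_one
          · exact (continuous_finset_sum _ fun i _ =>
              continuous_const.mul (hf i)).intervalIntegrable _ _
          · exact (continuous_const.mul hIcont).intervalIntegrable _ _
          · intro t _; exact this t
      _ = A * ∫ t in (0:ℝ)..1, Real.sqrt (∑ i, (f i t)^2) :=
          intervalIntegral.integral_const_mul _ _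
  nlinarith [key]

lemma hasDerivAt_gamma (x y : Fin d → ℝ) (t : ℝ) :
    HasDerivAt (fun s : ℝ => (1-s) • y + s • x) (x - y) t := by
  have h1 : HasDerivAt (fun s : ℝ => (1-s) • y) ((-1 : ℝ) • y) t := by
    have := ((hasDerivAt_const t (1:ℝ)).sub (hasDerivAt_id t)).smul_const y
    simpa using this
  have h2 : HasDerivAt (fun s : ℝ => s • x) x t := by
    simpa using (hasDerivAt_id t).smul_const x
  have := h1.add h2
  simp only [neg_one_smul, neg_add_eq_sub] at this
  exact this

lemma ftc_bound {v : (Fin d → ℝ) → (Fin m → ℝ)} (hv : ContDiff ℝ 1 v)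
    {x y : Fin d → ℝ} (hx : x ∈ unitCell d) (hy : y ∈ unitCell d) (hvy : v y = 0) :
    Real.sqrt (∑ i, (v x i)^2)
      ≤ ∫ t in (0:ℝ)..1, Real.sqrt ((d:ℝ) * Fsq v ((1-t) • y + t • x)) := by
  set γ : ℝ → (Fin d → ℝ) := fun s => (1-s) • y + s • x with hγ
  have hγc : Continuous γ := by fun_prop
  set f : Fin m → ℝ → ℝ := fun i t => fderiv ℝ (fun z => v z i) (γ t) (x - y) with hf
  have hfc : ∀ i, Continuous (f i) := fun i =>
    (continuous_fderiv_apply' hv i (x - y)).comp hγc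
  -- FTC per component
  have hFTC : ∀ i, ∫ t in (0:ℝ)..1, f i t = v x i := by
    intro i
    have hderiv : ∀ t ∈ Set.uIcc (0:ℝ) 1,
        HasDerivAt (fun s => v (γ s) i) (f i t) t := by
      intro t _
      have hvd : HasFDerivAt (fun z => v z i) (fderiv ℝ (fun z => v z i) (γ t)) (γ t) :=
        (((contDiff_comp_pi hv i).differentiable one_ne_zero) (γ t)).hasFDerivAt
      exact hvd.comp_hasDerivAt t (hasDerivAt_gamma x y t)
    have := intervalIntegral.integral_eq_sub_of_hasDerivAt hderiv
      ((hfc _).intervalIntegrable _ _)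
    rw [this]
    have h0 : γ 0 = y := by simp [hγ]
    have h1 : γ 1 = x := by simp [hγ]
    rw [h0, h1, hvy]; simp
  calc Real.sqrt (∑ i, (v x i)^2)
      = Real.sqrt (∑ i, (∫ t in (0:ℝ)..1, f i t)^2) := by
        congr 1; exact Finset.sum_congr rfl fun i _ => by rw [hFTC i]
    _ ≤ ∫ t in (0:ℝ)..1, Real.sqrt (∑ i, (f i t)^2) :=
        sqrt_sum_sq_intervalIntegral_le f hfc
    _ ≤ ∫ t in (0:ℝ)..1, Real.sqrt ((d:ℝ) * Fsq v (γ t)) := by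
        apply intervalIntegral.integral_mono_on zero_le_one
        · exact ((continuous_finset_sum _ fun i _ => (hfc i).pow 2).sqrt).intervalIntegrable _ _
        · exact ((continuous_const.mul ((continuous_Fsq hv).comp hγc)).sqrt).intervalIntegrable _ _
        · intro t _
          apply Real.sqrt_le_sqrt
          calc ∑ i, (f i t)^2 ≤ Fsq v (γ t) * ∑ j, ((x - y) j)^2 :=
              sum_sq_fderiv_le (γ t) (x - y)
            _ ≤ Fsq v (γ t) * d := by
                apply mul_le_mul_of_nonneg_left _ (Fsq_nonneg v _)
                calc ∑ j, ((x - y) j)^2 ≤ ∑ _j : Fin d, (1:ℝ) := by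
                      refine Finset.sum_le_sum fun j _ => ?_
                      have hxj := hx j (Set.mem_univ j)
                      have hyj := hy j (Set.mem_univ j)
                      simp only [Set.mem_Ioo] at hxj hyj
                      have : |x j - y j| ≤ 1 := by
                        rw [abs_le]; constructor <;> simp [Pi.sub_apply] <;> nlinarith
                      calc ((x-y) j)^2 = |x j - y j|^2 := by rw [sq_abs]; simp [Pi.sub_apply]
                        _ ≤ 1^2 := by nlinarith [abs_nonneg (x j - y j)]
                        _ = 1 := one_pow 2
                  _ = d := by simp
            _ = d * Fsq v (γ t) := mul_comm _ _

lemma measurableSet_unitCell : MeasurableSet (unitCell d) :=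
  MeasurableSet.univ_pi fun _ => measurableSet_Ioo

lemma volume_unitCell : volume (unitCell d) = 1 := by
  rw [unitCell, volume_pi_pi]
  simp

lemma maps_unitCell {a : ℝ} (ha0 : 0 < a) (ha1 : a < 1) {b : Fin d → ℝ}
    (hb : b ∈ unitCell d) {z : Fin d → ℝ} (hz : z ∈ unitCell d) :
    a • z + (1-a) • b ∈ unitCell d := by
  intro j _
  have hbj := hb j (Set.mem_univ j)
  have hzj := hz j (Set.mem_univ j)
  simp only [Set.mem_Ioo] at hbj hzj ⊢
  simp only [Pi.add_apply, Pi.smul_apply, smul_eq_mul]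
  constructor <;> nlinarith

lemma cov_bound (F : (Fin d → ℝ) → ℝ) {a : ℝ} (ha : 1/2 ≤ a) (ha1 : a < 1)
    {b : Fin d → ℝ} (hb : b ∈ unitCell d) :
    ∫⁻ z in unitCell d, ENNReal.ofReal (F (a • z + (1-a) • b))
      ≤ 2^d * ∫⁻ z in unitCell d, ENNReal.ofReal (F z) := by
  have ha0 : 0 < a := lt_of_lt_of_le (by norm_num) ha
  set f : (Fin d → ℝ) → (Fin d → ℝ) := fun z => a • z + (1-a) • b with hf
  have hf' : ∀ z ∈ unitCell d,
      HasFDerivWithinAt f (a • (1 : (Fin d → ℝ) →L[ℝ] (Fin d → ℝ))) (unitCell d) z := by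
    intro z _
    exact (((hasFDerivAt_id z).const_smul a).add_const ((1-a) • b)).hasFDerivWithinAt
  have hinj : Set.InjOn f (unitCell d) := by
    intro z1 _ z2 _ h
    have h' : a • z1 + (1-a) • b = a • z2 + (1-a) • b := h
    exact smul_right_injective _ (ne_of_gt ha0) (add_right_cancel h')
  have hdet : ((a • (1 : (Fin d → ℝ) →L[ℝ] (Fin d → ℝ))).det) = a ^ d := by
    simp [ContinuousLinearMap.det, Module.finrank_fin_fun, ContinuousLinearMap.one_def, ContinuousLinearMap.coe_id]
  have him := lintegral_image_eq_lintegral_abs_det_fderiv_mul volume measurableSet_unitCell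
    hf' hinj (fun z => ENNReal.ofReal (F z))
  simp only [hdet] at him
  have habs : |a ^ d| = a ^ d := abs_of_pos (pow_pos ha0 d)
  rw [habs] at him
  have him2 : ∫⁻ x in f '' unitCell d, ENNReal.ofReal (F x)
      = ENNReal.ofReal (a^d) * ∫⁻ z in unitCell d, ENNReal.ofReal (F (f z)) := by
    rw [him, lintegral_const_mul' _ _ ENNReal.ofReal_ne_top]
  have hsub : f '' unitCell d ⊆ unitCell d := by
    rintro _ ⟨z, hz, rfl⟩
    exact maps_unitCell ha0 ha1 hb hz
  have hle : ENNReal.ofReal (a^d) * ∫⁻ z in unitCell d, ENNReal.ofReal (F (f z))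
      ≤ ∫⁻ z in unitCell d, ENNReal.ofReal (F z) := by
    rw [← him2]
    exact lintegral_mono_set hsub
  have h2 : ((2:ℝ≥0∞)^d)⁻¹ ≤ ENNReal.ofReal (a^d) := by
    have : ENNReal.ofReal ((2⁻¹:ℝ)^d) ≤ ENNReal.ofReal (a^d) :=
      ENNReal.ofReal_le_ofReal (pow_le_pow_left₀ (by norm_num) (by linarith) d)
    calc ((2:ℝ≥0∞)^d)⁻¹ = (ENNReal.ofReal 2⁻¹)^d := by
          rw [ENNReal.ofReal_inv_of_pos (by norm_num : (0:ℝ) < 2)]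
          simp [ENNReal.inv_pow]
      _ = ENNReal.ofReal ((2⁻¹:ℝ)^d) := by rw [ENNReal.ofReal_pow (by norm_num)]
      _ ≤ _ := this
  set X := ∫⁻ z in unitCell d, ENNReal.ofReal (F (f z)) with hX
  have step : ((2:ℝ≥0∞)^d)⁻¹ * X ≤ ∫⁻ z in unitCell d, ENNReal.ofReal (F z) :=
    le_trans (mul_le_mul_left h2 X) hle
  calc X = (2:ℝ≥0∞)^d * (((2:ℝ≥0∞)^d)⁻¹ * X) := by
        rw [← mul_assoc, ENNReal.mul_inv_cancel (by positivity) (by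
          exact ENNReal.pow_ne_top ENNReal.ofNat_ne_top), one_mul]
    _ ≤ 2^d * ∫⁻ z in unitCell d, ENNReal.ofReal (F z) := mul_le_mul_right step _

/-! ### auxiliary integrands -/

noncomputable def gg (v : (Fin d → ℝ) → (Fin m → ℝ)) (x y : Fin d → ℝ) (t : ℝ) : ℝ≥0∞ :=
  ENNReal.ofReal (Fsq v ((1-t) • y + t • x))

noncomputable def qq (v : (Fin d → ℝ) → (Fin m → ℝ)) (x y : Fin d → ℝ) (t : ℝ) : ℝ≥0∞ :=
  ENNReal.ofReal (Real.sqrt ((d:ℝ) * Fsq v ((1-t) • y + t • x)))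

noncomputable def kappa (E : Set (Fin d → ℝ)) : Measure ((Fin d → ℝ) × ℝ) :=
  (volume.restrict E).prod (volume.restrict (Ioo (0:ℝ) 1))

instance kappa_sfinite (E : Set (Fin d → ℝ)) : SFinite (kappa E) := by
  unfold kappa; infer_instance

noncomputable def JJ (E : Set (Fin d → ℝ)) (v : (Fin d → ℝ) → (Fin m → ℝ))
    (x : Fin d → ℝ) : ℝ≥0∞ :=
  ∫⁻ p, gg v x p.1 p.2 ∂(kappa E)

/-! ### continuity / measurability -/

lemma continuous_gg_triple {v : (Fin d → ℝ) → (Fin m → ℝ)} (hv : ContDiff ℝ 1 v) :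
    Continuous (fun w : ((Fin d → ℝ) × (Fin d → ℝ)) × ℝ => gg v w.1.1 w.1.2 w.2) := by
  unfold gg
  apply ENNReal.continuous_ofReal.comp
  apply (continuous_Fsq hv).comp
  exact ((continuous_const.sub continuous_snd).smul continuous_fst.snd).add
    (continuous_snd.smul continuous_fst.fst)

lemma measurable_gg_pair {v : (Fin d → ℝ) → (Fin m → ℝ)} (hv : ContDiff ℝ 1 v)
    (x : Fin d → ℝ) : Measurable (fun p : (Fin d → ℝ) × ℝ => gg v x p.1 p.2) := by
  unfold gg
  apply (ENNReal.continuous_ofReal.comp ((continuous_Fsq hv).comp ?_)).measurable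
  exact ((continuous_const.sub continuous_snd).smul continuous_fst).add
    (continuous_snd.smul continuous_const)

lemma measurable_gg_xt {v : (Fin d → ℝ) → (Fin m → ℝ)} (hv : ContDiff ℝ 1 v)
    (y : Fin d → ℝ) : Measurable (fun p : (Fin d → ℝ) × ℝ => gg v p.1 y p.2) := by
  unfold gg
  apply (ENNReal.continuous_ofReal.comp ((continuous_Fsq hv).comp ?_)).measurable
  exact ((continuous_const.sub continuous_snd).smul continuous_const).add
    (continuous_snd.smul continuous_fst)

lemma continuous_qq {v : (Fin d → ℝ) → (Fin m → ℝ)} (hv : ContDiff ℝ 1 v) (x : Fin d → ℝ) :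
    Continuous (fun p : (Fin d → ℝ) × ℝ => qq v x p.1 p.2) := by
  unfold qq
  apply ENNReal.continuous_ofReal.comp
  apply Real.continuous_sqrt.comp
  apply continuous_const.mul
  apply (continuous_Fsq hv).comp
  exact ((continuous_const.sub continuous_snd).smul continuous_fst).add
    (continuous_snd.smul continuous_const)

lemma measurable_int_gg {v : (Fin d → ℝ) → (Fin m → ℝ)} (hv : ContDiff ℝ 1 v)
    (s : Set ℝ) :
    Measurable (fun r : (Fin d → ℝ) × (Fin d → ℝ) => ∫⁻ t in s, gg v r.1 r.2 t) :=
  Measurable.lintegral_prod_right'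
    (f := fun w : ((Fin d → ℝ) × (Fin d → ℝ)) × ℝ => gg v w.1.1 w.1.2 w.2)
    (continuous_gg_triple hv).measurable

lemma measurable_int_int_gg {v : (Fin d → ℝ) → (Fin m → ℝ)} (hv : ContDiff ℝ 1 v)
    (E : Set (Fin d → ℝ)) (s : Set ℝ) :
    Measurable (fun x : Fin d → ℝ => ∫⁻ y in E, ∫⁻ t in s, gg v x y t) :=
  Measurable.lintegral_prod_right'
    (f := fun r : (Fin d → ℝ) × (Fin d → ℝ) => ∫⁻ t in s, gg v r.1 r.2 t)
    (measurable_int_gg hv s)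

lemma measurable_JJ {v : (Fin d → ℝ) → (Fin m → ℝ)} (hv : ContDiff ℝ 1 v)
    (E : Set (Fin d → ℝ)) : Measurable (JJ E v) := by
  unfold JJ
  exact Measurable.lintegral_prod_right'
    (f := fun q : (Fin d → ℝ) × ((Fin d → ℝ) × ℝ) => gg v q.1 q.2.1 q.2.2)
    (by
      unfold gg
      apply (ENNReal.continuous_ofReal.comp ((continuous_Fsq hv).comp ?_)).measurable
      exact ((continuous_const.sub continuous_snd.snd).smul continuous_snd.fst).add
        (continuous_snd.snd.smul continuous_fst))

/-! ### Step B -/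

lemma hb1 {E : Set (Fin d → ℝ)} (hEsub : E ⊆ unitCell d)
    {v : (Fin d → ℝ) → (Fin m → ℝ)} (hv : ContDiff ℝ 1 v) (hz : ∀ y ∈ E, v y = 0)
    {x : Fin d → ℝ} (hx : x ∈ unitCell d) {y : Fin d → ℝ} (hy : y ∈ E) :
    ENNReal.ofReal (Real.sqrt (∑ i, (v x i)^2))
      ≤ ∫⁻ t in Ioo (0:ℝ) 1, qq v x y t := by
  have hreal := ftc_bound hv hx (hEsub hy) (hz y hy)
  refine (ENNReal.ofReal_le_ofReal hreal).trans (le_of_eq ?_)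
  have hcont1 : Continuous (fun t : ℝ => Real.sqrt ((d:ℝ) * Fsq v ((1-t) • y + t • x))) := by
    apply Real.continuous_sqrt.comp
    apply continuous_const.mul
    apply (continuous_Fsq hv).comp
    exact ((continuous_const.sub continuous_id).smul continuous_const).add
      (continuous_id.smul continuous_const)
  simp only [qq]
  rw [intervalIntegral.integral_of_le zero_le_one,
    ofReal_integral_eq_lintegral_ofReal hcont1.integrableOn_Ioc
      (Filter.Eventually.of_forall fun t => Real.sqrt_nonneg _),
    Measure.restrict_congr_set Ioo_ae_eq_Ioc]

lemma stepB {E : Set (Fin d → ℝ)} (hEsub : E ⊆ unitCell d)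
    {v : (Fin d → ℝ) → (Fin m → ℝ)} (hv : ContDiff ℝ 1 v) (hz : ∀ y ∈ E, v y = 0)
    {x : Fin d → ℝ} (hx : x ∈ unitCell d) :
    (volume E)^2 * ENNReal.ofReal (∑ i, (v x i)^2)
      ≤ (d:ℝ≥0∞) * volume E * JJ E v x := by
  have hEfin : volume E ≠ ∞ := by
    refine ne_of_lt (lt_of_le_of_lt (measure_mono hEsub) ?_)
    rw [volume_unitCell]; exact one_lt_top
  have hκuniv : kappa E Set.univ = volume E := by
    rw [kappa, ← Set.univ_prod_univ, Measure.prod_prod]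
    simp [Real.volume_Ioo]
  have hqm : Measurable (fun p : (Fin d → ℝ) × ℝ => qq v x p.1 p.2) :=
    (continuous_qq hv x).measurable
  have hb2 : volume E * ENNReal.ofReal (Real.sqrt (∑ i, (v x i)^2))
      ≤ ∫⁻ p, qq v x p.1 p.2 ∂(kappa E) := by
    have hmY : Measurable fun y => ∫⁻ t in Ioo (0:ℝ) 1, qq v x y t :=
      Measurable.lintegral_prod_right' (f := fun p : (Fin d → ℝ) × ℝ => qq v x p.1 p.2) hqm
    calc volume E * ENNReal.ofReal (Real.sqrt (∑ i, (v x i)^2))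
        = ∫⁻ _ in E, ENNReal.ofReal (Real.sqrt (∑ i, (v x i)^2)) := by
          rw [setLIntegral_const, mul_comm]
      _ ≤ ∫⁻ y in E, ∫⁻ t in Ioo (0:ℝ) 1, qq v x y t :=
          setLIntegral_mono hmY fun y hy => hb1 hEsub hv hz hx hy
      _ = ∫⁻ p, qq v x p.1 p.2 ∂(kappa E) := by
          rw [kappa, lintegral_prod _ hqm.aemeasurable]
  have hCS : ∫⁻ p, qq v x p.1 p.2 ∂(kappa E)
      ≤ ((d:ℝ≥0∞) * JJ E v x) ^ (1/2:ℝ) * (volume E) ^ (1/2:ℝ) := by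
    have hconj : Real.HolderConjugate 2 2 := Real.HolderConjugate.two_two
    have hcs := ENNReal.lintegral_mul_le_Lp_mul_Lq (kappa E) hconj hqm.aemeasurable
      (aemeasurable_const (b := (1:ℝ≥0∞)))
    simp only [mul_one, Pi.mul_apply] at hcs
    have hq2 : ∀ p : (Fin d → ℝ) × ℝ,
        qq v x p.1 p.2 ^ (2:ℝ) = (d:ℝ≥0∞) * gg v x p.1 p.2 := by
      intro p
      have h2n : ((2:ℝ)) = ((2:ℕ):ℝ) := by norm_num
      rw [h2n, ENNReal.rpow_natCast]
      have hnn : (0:ℝ) ≤ (d:ℝ) * Fsq v ((1-p.2) • p.1 + p.2 • x) :=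
        mul_nonneg (Nat.cast_nonneg d) (Fsq_nonneg v _)
      rw [qq, gg, sq, ← ENNReal.ofReal_mul (Real.sqrt_nonneg _), Real.mul_self_sqrt hnn,
        ENNReal.ofReal_mul (Nat.cast_nonneg d), ENNReal.ofReal_natCast]
    have hint2 : ∫⁻ p, qq v x p.1 p.2 ^ (2:ℝ) ∂(kappa E) = (d:ℝ≥0∞) * JJ E v x := by
      rw [JJ]
      calc ∫⁻ p, qq v x p.1 p.2 ^ (2:ℝ) ∂(kappa E)
          = ∫⁻ p, (d:ℝ≥0∞) * gg v x p.1 p.2 ∂(kappa E) := lintegral_congr hq2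
        _ = (d:ℝ≥0∞) * ∫⁻ p, gg v x p.1 p.2 ∂(kappa E) :=
            lintegral_const_mul' _ _ (ENNReal.natCast_ne_top d)
    have hone : ∫⁻ _ : (Fin d → ℝ) × ℝ, (1:ℝ≥0∞) ^ (2:ℝ) ∂(kappa E) = volume E := by
      simp only [ENNReal.one_rpow]
      rw [lintegral_one, hκuniv]
    rw [hint2, hone] at hcs
    exact hcs
  have hchain := hb2.trans hCS
  have hsq := mul_le_mul' hchain hchain
  have hhalf : ∀ w : ℝ≥0∞, w ^ (1/2:ℝ) * w ^ (1/2:ℝ) = w := by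
    intro w
    rw [← ENNReal.rpow_add_of_nonneg _ _ (by norm_num) (by norm_num)]
    norm_num
  calc (volume E)^2 * ENNReal.ofReal (∑ i, (v x i)^2)
      = (volume E * ENNReal.ofReal (Real.sqrt (∑ i, (v x i)^2)))
        * (volume E * ENNReal.ofReal (Real.sqrt (∑ i, (v x i)^2))) := by
        have h1 : ENNReal.ofReal (Real.sqrt (∑ i, (v x i)^2))
            * ENNReal.ofReal (Real.sqrt (∑ i, (v x i)^2))
            = ENNReal.ofReal (∑ i, (v x i)^2) := by
          rw [← ENNReal.ofReal_mul (Real.sqrt_nonneg _),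
            Real.mul_self_sqrt (Finset.sum_nonneg fun _ _ => sq_nonneg _)]
        rw [sq, ← h1]; ring
    _ ≤ (((d:ℝ≥0∞) * JJ E v x) ^ (1/2:ℝ) * (volume E) ^ (1/2:ℝ))
        * (((d:ℝ≥0∞) * JJ E v x) ^ (1/2:ℝ) * (volume E) ^ (1/2:ℝ)) := hsq
    _ = ((d:ℝ≥0∞) * JJ E v x) * volume E := by
        rw [mul_mul_mul_comm, hhalf, hhalf]
    _ = (d:ℝ≥0∞) * volume E * JJ E v x := by ring

/-! ### Step C -/

lemma stepC {E : Set (Fin d → ℝ)} (hEsub : E ⊆ unitCell d)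
    {v : (Fin d → ℝ) → (Fin m → ℝ)} (hv : ContDiff ℝ 1 v) :
    ∫⁻ x in unitCell d, JJ E v x
      ≤ 2^(d+1) * ∫⁻ z in unitCell d, ENNReal.ofReal (Fsq v z) := by
  set Y := unitCell d with hY
  set R := ∫⁻ z in unitCell d, ENNReal.ofReal (Fsq v z) with hR
  have hE1 : volume E ≤ 1 := by
    rw [← volume_unitCell (d := d)]; exact measure_mono hEsub
  set s1 : Set ℝ := Ioc 0 (1/2) with hs1
  set s2 : Set ℝ := Ioo (1/2) 1 with hs2
  have hI12 : Ioo (0:ℝ) 1 = s1 ∪ s2 :=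
    (Set.Ioc_union_Ioo_eq_Ioo (by norm_num) (by norm_num)).symm
  have hdisj : Disjoint s1 s2 := by
    rw [Set.disjoint_left]
    rintro t ⟨_, h1⟩ ⟨h2, _⟩
    linarith
  have hJsplit : ∀ x, JJ E v x = (∫⁻ y in E, ∫⁻ t in s1, gg v x y t)
      + ∫⁻ y in E, ∫⁻ t in s2, gg v x y t := by
    intro x
    rw [JJ, kappa, lintegral_prod _ (measurable_gg_pair hv x).aemeasurable]
    have hsplit : ∀ y, ∫⁻ t in Ioo (0:ℝ) 1, gg v x y t
        = (∫⁻ t in s1, gg v x y t) + ∫⁻ t in s2, gg v x y t := by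
      intro y
      rw [hI12, lintegral_union measurableSet_Ioo hdisj]
    simp_rw [hsplit]
    rw [lintegral_add_left]
    exact Measurable.lintegral_prod_right'
      (f := fun p : (Fin d → ℝ) × ℝ => gg v x p.1 p.2) (measurable_gg_pair hv x)
  -- T1
  have hT1 : ∫⁻ x in Y, ∫⁻ y in E, ∫⁻ t in s1, gg v x y t ≤ 2^d * R := by
    have hbound : ∀ x ∈ Y, (∫⁻ y in E, ∫⁻ t in s1, gg v x y t) ≤ 2^d * R := by
      intro x hx
      have hswap : ∫⁻ y in E, ∫⁻ t in s1, gg v x y t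
          = ∫⁻ t in s1, ∫⁻ y in E, gg v x y t :=
        lintegral_lintegral_swap (measurable_gg_pair hv x).aemeasurable
      rw [hswap]
      calc ∫⁻ t in s1, ∫⁻ y in E, gg v x y t
          ≤ ∫⁻ _ in s1, 2^d * R := by
            refine setLIntegral_mono measurable_const fun t ht => ?_
            rw [hs1, Set.mem_Ioc] at ht
            calc ∫⁻ y in E, gg v x y t ≤ ∫⁻ y in Y, gg v x y t := lintegral_mono_set hEsub
              _ ≤ 2^d * R := by
                  have hcov := cov_bound (Fsq v) (a := 1-t) (by linarith [ht.2])
                    (by linarith [ht.1]) hx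
                  have h1t : (1:ℝ) - (1-t) = t := by ring
                  rw [h1t] at hcov
                  simpa [gg, hY, hR] using hcov
        _ = 2^d * R * volume s1 := setLIntegral_const _ _
        _ ≤ 2^d * R * 1 := by
            refine mul_le_mul_right ?_ _
            rw [hs1, Real.volume_Ioc]
            exact ENNReal.ofReal_le_one.mpr (by norm_num)
        _ = 2^d * R := mul_one _
    calc ∫⁻ x in Y, ∫⁻ y in E, ∫⁻ t in s1, gg v x y t
        ≤ ∫⁻ _ in Y, 2^d * R := setLIntegral_mono measurable_const hbound
      _ = 2^d * R * volume Y := setLIntegral_const _ _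
      _ = 2^d * R := by rw [hY, volume_unitCell, mul_one]
  -- T2
  have hT2 : ∫⁻ x in Y, ∫⁻ y in E, ∫⁻ t in s2, gg v x y t ≤ 2^d * R := by
    have hswapxy : ∫⁻ x in Y, ∫⁻ y in E, ∫⁻ t in s2, gg v x y t
        = ∫⁻ y in E, ∫⁻ x in Y, ∫⁻ t in s2, gg v x y t :=
      lintegral_lintegral_swap (measurable_int_gg hv s2).aemeasurable
    rw [hswapxy]
    have hbound : ∀ y ∈ E, (∫⁻ x in Y, ∫⁻ t in s2, gg v x y t) ≤ 2^d * R := by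
      intro y hy
      have hswap : ∫⁻ x in Y, ∫⁻ t in s2, gg v x y t
          = ∫⁻ t in s2, ∫⁻ x in Y, gg v x y t :=
        lintegral_lintegral_swap (measurable_gg_xt hv y).aemeasurable
      rw [hswap]
      calc ∫⁻ t in s2, ∫⁻ x in Y, gg v x y t
          ≤ ∫⁻ _ in s2, 2^d * R := by
            refine setLIntegral_mono measurable_const fun t ht => ?_
            rw [hs2, Set.mem_Ioo] at ht
            have hcov := cov_bound (Fsq v) (a := t) (le_of_lt ht.1) ht.2 (hEsub hy)
            calc ∫⁻ x in Y, gg v x y t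
                = ∫⁻ x in Y, ENNReal.ofReal (Fsq v (t • x + (1-t) • y)) := by
                  apply lintegral_congr
                  intro x
                  rw [gg, add_comm]
              _ ≤ 2^d * R := hcov
        _ = 2^d * R * volume s2 := setLIntegral_const _ _
        _ ≤ 2^d * R * 1 := by
            refine mul_le_mul_right ?_ _
            rw [hs2, Real.volume_Ioo]
            exact ENNReal.ofReal_le_one.mpr (by norm_num)
        _ = 2^d * R := mul_one _
    calc ∫⁻ y in E, ∫⁻ x in Y, ∫⁻ t in s2, gg v x y t
        ≤ ∫⁻ _ in E, 2^d * R := setLIntegral_mono measurable_const hbound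
      _ = 2^d * R * volume E := setLIntegral_const _ _
      _ ≤ 2^d * R * 1 := mul_le_mul_right hE1 _
      _ = 2^d * R := mul_one _
  calc ∫⁻ x in Y, JJ E v x
      = (∫⁻ x in Y, ∫⁻ y in E, ∫⁻ t in s1, gg v x y t)
        + ∫⁻ x in Y, ∫⁻ y in E, ∫⁻ t in s2, gg v x y t := by
        simp_rw [hJsplit]
        exact lintegral_add_left (measurable_int_int_gg hv E s1) _
    _ ≤ 2^d * R + 2^d * R := add_le_add hT1 hT2
    _ = 2^(d+1) * R := by rw [pow_succ]; ring

/-! ### the core inequality, `ε = 1`, lintegral form -/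

lemma core_lintegral (E : Set (Fin d → ℝ)) (hEsub : E ⊆ unitCell d)
    (hEmeas : MeasurableSet E) (hEpos : 0 < volume E)
    {v : (Fin d → ℝ) → (Fin m → ℝ)} (hv : ContDiff ℝ 1 v)
    (hz : ∀ y ∈ E, v y = 0) :
    ∫⁻ x in unitCell d, ENNReal.ofReal (∑ i, (v x i)^2)
      ≤ ((d:ℝ≥0∞) * 2^(d+1) * (volume E)⁻¹)
        * ∫⁻ z in unitCell d, ENNReal.ofReal (Fsq v z) := by
  set Y := unitCell d with hY
  set R := ∫⁻ z in unitCell d, ENNReal.ofReal (Fsq v z) with hR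
  set L := ∫⁻ x in Y, ENNReal.ofReal (∑ i, (v x i)^2) with hL
  have hEfin : volume E ≠ ∞ := by
    refine ne_of_lt (lt_of_le_of_lt (measure_mono hEsub) ?_)
    rw [volume_unitCell]; exact one_lt_top
  have main1 : (volume E)^2 * L ≤ (d:ℝ≥0∞) * volume E * ∫⁻ x in Y, JJ E v x := by
    rw [hL, ← lintegral_const_mul' _ _ (pow_ne_top hEfin),
      ← lintegral_const_mul' _ _ (ENNReal.mul_ne_top (ENNReal.natCast_ne_top d) hEfin)]
    exact setLIntegral_mono ((measurable_JJ hv E).const_mul _)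
      (fun x hx => stepB hEsub hv hz hx)
  have hfinal : volume E * (volume E * L) ≤ volume E * ((d:ℝ≥0∞) * 2^(d+1) * R) := by
    calc volume E * (volume E * L) = (volume E)^2 * L := by rw [sq]; ring
      _ ≤ (d:ℝ≥0∞) * volume E * ∫⁻ x in Y, JJ E v x := main1
      _ ≤ (d:ℝ≥0∞) * volume E * (2^(d+1) * R) := mul_le_mul_right (stepC hEsub hv) _
      _ = volume E * ((d:ℝ≥0∞) * 2^(d+1) * R) := by ring
  have hcancel : volume E * L ≤ (d:ℝ≥0∞) * 2^(d+1) * R :=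
    (ENNReal.mul_le_mul_iff_right (ne_of_gt hEpos) hEfin).mp hfinal
  calc L = (volume E)⁻¹ * (volume E * L) := by
        rw [← mul_assoc, ENNReal.inv_mul_cancel (ne_of_gt hEpos) hEfin, one_mul]
    _ ≤ (volume E)⁻¹ * ((d:ℝ≥0∞) * 2^(d+1) * R) := mul_le_mul_right hcancel _
    _ = (d:ℝ≥0∞) * 2^(d+1) * (volume E)⁻¹ * R := by ring

lemma contDiff_affine (y₀ : Fin d → ℝ) (ε : ℝ) :
    ContDiff ℝ 1 (fun z : Fin d → ℝ => y₀ + ε • z) :=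
  contDiff_const.add (contDiff_id.const_smul ε)

lemma Fsq_comp_affine {v : (Fin d → ℝ) → (Fin m → ℝ)} (hv : ContDiff ℝ 1 v)
    (y₀ : Fin d → ℝ) (ε : ℝ) (z : Fin d → ℝ) :
    Fsq (fun x => v (y₀ + ε • x)) z = ε^2 * Fsq v (y₀ + ε • z) := by
  unfold Fsq
  rw [Finset.mul_sum]
  refine Finset.sum_congr rfl fun i _ => ?_
  rw [Finset.mul_sum]
  refine Finset.sum_congr rfl fun j _ => ?_
  have hφ : HasFDerivAt (fun x : Fin d → ℝ => y₀ + ε • x)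
      (ε • (1 : (Fin d → ℝ) →L[ℝ] (Fin d → ℝ))) z :=
    ((hasFDerivAt_id z).const_smul ε).const_add y₀
  have hvi : HasFDerivAt (fun w => v w i)
      (fderiv ℝ (fun w => v w i) (y₀ + ε • z)) (y₀ + ε • z) :=
    (((contDiff_comp_pi hv i).differentiable one_ne_zero) _).hasFDerivAt
  have hcomp := hvi.comp z hφ
  have heq : (fun x : Fin d → ℝ => v (y₀ + ε • x) i)
      = (fun w => v w i) ∘ (fun x : Fin d → ℝ => y₀ + ε • x) := rfl
  rw [heq, hcomp.fderiv]
  rw [ContinuousLinearMap.comp_apply]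
  have : (ε • (1 : (Fin d → ℝ) →L[ℝ] (Fin d → ℝ))) (Pi.single j 1)
      = ε • (Pi.single j 1 : Fin d → ℝ) := by
    simp
  rw [this, _root_.map_smul, smul_eq_mul, mul_pow]

lemma lintegral_scaled (G : (Fin d → ℝ) → ℝ) {ε : ℝ} (hε : 0 < ε) (y₀ : Fin d → ℝ) :
    ∫⁻ x in translatedScaled y₀ ε (unitCell d), ENNReal.ofReal (G x)
      = ENNReal.ofReal (ε^d) * ∫⁻ z in unitCell d, ENNReal.ofReal (G (y₀ + ε • z)) := by
  have hf' : ∀ z ∈ unitCell d, HasFDerivWithinAt (fun z : Fin d → ℝ => y₀ + ε • z)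
      (ε • (1 : (Fin d → ℝ) →L[ℝ] (Fin d → ℝ))) (unitCell d) z := fun z _ =>
    (((hasFDerivAt_id z).const_smul ε).const_add y₀).hasFDerivWithinAt
  have hinj : Set.InjOn (fun z : Fin d → ℝ => y₀ + ε • z) (unitCell d) := by
    intro z1 _ z2 _ h
    have h' : ε • z1 = ε • z2 := by
      have := congrArg (fun w => w - y₀) h
      simpa using this
    exact smul_right_injective _ (ne_of_gt hε) h'
  have hdet : ((ε • (1 : (Fin d → ℝ) →L[ℝ] (Fin d → ℝ))).det) = ε ^ d := by
    simp [ContinuousLinearMap.det, Module.finrank_fin_fun, ContinuousLinearMap.one_def,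
      ContinuousLinearMap.coe_id]
  have him := lintegral_image_eq_lintegral_abs_det_fderiv_mul volume measurableSet_unitCell
    hf' hinj (fun x => ENNReal.ofReal (G x))
  rw [translatedScaled, him, ← lintegral_const_mul' _ _ ENNReal.ofReal_ne_top]
  apply lintegral_congr
  intro z
  rw [hdet, abs_of_pos (pow_pos hε d)]

end PoincareAux

/-- **Scaled Poincaré inequality on a single cell for functions vanishing on a set of
positive measure**: if `E ⊆ (0,1)^d` has positive measure, then there is `C > 0`
(depending only on `E`) such that for every `ε > 0`, every `y₀ ∈ ℝ^d`, and every `C¹`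
function `v : ℝ^d → ℝ^m` vanishing on `y₀ + εE`,
`∫_{y₀+εY} |v|² ≤ C ε² ∫_{y₀+εY} ‖Dv‖²`. -/
theorem scaled_poincare_single_cell {d m : ℕ} (hd : 1 ≤ d) (hm : 1 ≤ m)
    (E : Set (Fin d → ℝ)) (hEsub : E ⊆ unitCell d)
    (hEmeas : MeasurableSet E) (hEpos : 0 < volume E) :
    ∃ C : ℝ, 0 < C ∧
      ∀ (ε : ℝ), 0 < ε → ∀ (y₀ : Fin d → ℝ),
        ∀ v : (Fin d → ℝ) → (Fin m → ℝ), ContDiff ℝ 1 v →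
          (∀ x ∈ translatedScaled y₀ ε E, v x = 0) →
          ∫ x in translatedScaled y₀ ε (unitCell d), ∑ i, (v x i) ^ 2
            ≤ C * ε ^ 2 *
              ∫ x in translatedScaled y₀ ε (unitCell d),
                ∑ i, ∑ j, (fderiv ℝ (fun z => v z i) x (Pi.single j 1)) ^ 2 := by
  have hEfin : volume E ≠ ∞ := by
    refine ne_of_lt (lt_of_le_of_lt (measure_mono hEsub) ?_)
    rw [volume_unitCell]; exact one_lt_top
  set Cl : ℝ≥0∞ := (d:ℝ≥0∞) * 2^(d+1) * (volume E)⁻¹ with hCl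
  have hClfin : Cl ≠ ∞ := by
    apply ENNReal.mul_ne_top
    · exact ENNReal.mul_ne_top (ENNReal.natCast_ne_top d)
        (ENNReal.pow_ne_top ENNReal.ofNat_ne_top)
    · exact ENNReal.inv_ne_top.mpr (ne_of_gt hEpos)
  have hClpos : Cl ≠ 0 := by
    apply mul_ne_zero
    · apply mul_ne_zero
      · exact Nat.cast_ne_zero.mpr (by omega)
      · exact pow_ne_zero _ (by norm_num)
    · exact ENNReal.inv_ne_zero.mpr hEfin
  refine ⟨Cl.toReal, ENNReal.toReal_pos hClpos hClfin, ?_⟩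
  intro ε hε y₀ v hv hvanish
  set S := translatedScaled y₀ ε (unitCell d) with hS
  set w : (Fin d → ℝ) → (Fin m → ℝ) := fun z => v (y₀ + ε • z) with hw
  have hwc : ContDiff ℝ 1 w := hv.comp (contDiff_affine y₀ ε)
  have hwz : ∀ y ∈ E, w y = 0 := fun y hy => hvanish _ ⟨y, hy, rfl⟩
  -- the lintegral inequality on S
  set Ll := ∫⁻ x in S, ENNReal.ofReal (∑ i, (v x i)^2) with hLl
  set Rl := ∫⁻ x in S, ENNReal.ofReal (Fsq v x) with hRl
  have key : Ll ≤ Cl * ENNReal.ofReal (ε^2) * Rl := by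
    rw [hLl, hRl, hS, lintegral_scaled (fun x => ∑ i, (v x i)^2) hε y₀,
      lintegral_scaled (Fsq v) hε y₀]
    have hcore := core_lintegral E hEsub hEmeas hEpos hwc hwz
    have hFsqw : ∫⁻ z in unitCell d, ENNReal.ofReal (Fsq w z)
        = ENNReal.ofReal (ε^2) * ∫⁻ z in unitCell d, ENNReal.ofReal (Fsq v (y₀ + ε • z)) := by
      rw [← lintegral_const_mul' _ _ ENNReal.ofReal_ne_top]
      apply lintegral_congr
      intro z
      rw [hw, Fsq_comp_affine hv y₀ ε z, ENNReal.ofReal_mul (sq_nonneg ε)]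
    calc ENNReal.ofReal (ε^d) * ∫⁻ z in unitCell d, ENNReal.ofReal (∑ i, (v (y₀ + ε • z) i)^2)
        ≤ ENNReal.ofReal (ε^d) * (Cl * ∫⁻ z in unitCell d, ENNReal.ofReal (Fsq w z)) :=
          mul_le_mul_right hcore _
      _ = Cl * ENNReal.ofReal (ε^2)
          * (ENNReal.ofReal (ε^d) * ∫⁻ z in unitCell d, ENNReal.ofReal (Fsq v (y₀ + ε • z))) := by
          rw [hFsqw]; ring
  -- finiteness of Rl
  have hRfin : Rl ≠ ∞ := by
    set K := (fun z : Fin d → ℝ => y₀ + ε • z) '' (Set.pi Set.univ fun _ => Set.Icc (0:ℝ) 1)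
      with hK
    have hKcomp : IsCompact K :=
      (isCompact_univ_pi fun _ => isCompact_Icc).image (contDiff_affine y₀ ε).continuous
    have hsub : S ⊆ K := by
      rw [hS, hK, translatedScaled]
      apply Set.image_mono
      intro z hz j _
      exact Set.mem_Icc_of_Ioo (hz j (Set.mem_univ j))
    obtain ⟨M, hM⟩ := hKcomp.exists_bound_of_continuousOn (continuous_Fsq hv).continuousOn
    have hb : Rl ≤ ENNReal.ofReal M * volume K := by
      rw [hRl]
      calc ∫⁻ x in S, ENNReal.ofReal (Fsq v x)
          ≤ ∫⁻ _ in S, ENNReal.ofReal M := by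
            refine setLIntegral_mono measurable_const fun x hx => ?_
            refine ENNReal.ofReal_le_ofReal ?_
            have := hM x (hsub hx)
            rw [Real.norm_eq_abs] at this
            exact (le_abs_self _).trans this
        _ = ENNReal.ofReal M * volume S := setLIntegral_const _ _
        _ ≤ ENNReal.ofReal M * volume K := mul_le_mul_right (measure_mono hsub) _
    exact ne_of_lt (lt_of_le_of_lt hb
      (ENNReal.mul_lt_top ENNReal.ofReal_lt_top hKcomp.measure_lt_top))
  -- convert to Bochner integrals
  have hvc : Continuous fun x => ∑ i, (v x i)^2 :=
    continuous_finset_sum _ fun i _ =>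
      ((continuous_apply i).comp hv.continuous).pow 2
  have hLeq : ∫ x in S, ∑ i, (v x i)^2 = Ll.toReal := by
    rw [hLl, integral_eq_lintegral_of_nonneg_ae
      (Filter.Eventually.of_forall fun x => Finset.sum_nonneg fun _ _ => sq_nonneg _)
      hvc.aestronglyMeasurable]
  have hReq : ∫ x in S, Fsq v x = Rl.toReal := by
    rw [hRl, integral_eq_lintegral_of_nonneg_ae
      (Filter.Eventually.of_forall fun x => Fsq_nonneg v x)
      (continuous_Fsq hv).aestronglyMeasurable]
  have hgoal2 : ∫ x in S, ∑ i, ∑ j, (fderiv ℝ (fun z => v z i) x (Pi.single j 1)) ^ 2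
      = ∫ x in S, Fsq v x := rfl
  rw [hgoal2, hLeq, hReq]
  calc Ll.toReal ≤ (Cl * ENNReal.ofReal (ε^2) * Rl).toReal := by
        refine ENNReal.toReal_mono ?_ key
        exact ENNReal.mul_ne_top (ENNReal.mul_ne_top hClfin ENNReal.ofReal_ne_top) hRfin
    _ = Cl.toReal * ε^2 * Rl.toReal := by
        rw [ENNReal.toReal_mul, ENNReal.toReal_mul, ENNReal.toReal_ofReal (sq_nonneg ε)]
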